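/- Applying the three-rule error model (return e → return [0]; range(a,b) → range(a+1,b); e₀ == e₁ → False) to the student's computeDeriv yields a candidate space containing a program extensionally equal to the reference on all lists of length ≤ 4 with 4-bit entries, and the minimum number of corrections over all such equivalent candidates is 3. -/

import Mathlib

def computeDeriv (poly : List ℤ) : List ℤ :=
  let result := (List.range poly.length).map (fun i : ℕ => (i : ℤ) * poly[i]!)
  if poly.length = 1 then result else result.tail

/-- The candidate space induced by the three-rule error model on the student's
program: 5 binary correction sites.
Site 1 toggles `len(poly)==1` to `False`; site 2 toggles the length-1 branch
`return deriv` to `return [0]`; site 3 toggles the `range` start from `0` to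
`1`; site 4 toggles the inner condition `poly[expo]==0` to `False`; site 5
toggles the final `return deriv` to `return [0]`. -/
def candidate (s : Bool × Bool × Bool × Bool × Bool) (poly : List ℤ) : List ℤ :=
  let s1 := s.1; let s2 := s.2.1; let s3 := s.2.2.1
  let s4 := s.2.2.2.1; let s5 := s.2.2.2.2
  if (if s1 then False else poly.length = 1) then
    (if s2 then [0] else [])
  else
    let start : ℕ := if s3 then 1 else 0
    let deriv :=
      ((List.range' start (poly.length - start)).filter
          (fun i => if s4 then true else !(poly[i]! == 0))).map
        (fun i => poly[(i : ℕ)]! * (i : ℤ))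
    if s5 then [0] else deriv

/-- Number of corrections used by a candidate. -/
def cost (s : Bool × Bool × Bool × Bool × Bool) : ℕ :=
  (if s.1 then 1 else 0) + (if s.2.1 then 1 else 0) + (if s.2.2.1 then 1 else 0) +
    (if s.2.2.2.1 then 1 else 0) + (if s.2.2.2.2 then 1 else 0)

/-- Membership in the bounded verification domain: lists of length 1–4 with
4-bit entries. -/
def InDomain (poly : List ℤ) : Prop :=
  1 ≤ poly.length ∧ poly.length ≤ 4 ∧ ∀ x ∈ poly, -8 ≤ x ∧ x < 8

/-- The candidate correcting sites {2,3,4} (cost 3) agrees with the reference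
on all inputs in the bounded domain, and no candidate of cost ≤ 2 does; hence
the minimum number of corrections over all equivalent candidates is 3. -/
theorem min_corrections_is_three :
    cost (false, true, true, true, false) = 3 ∧
    (∀ poly : List ℤ, InDomain poly →
      candidate (false, true, true, true, false) poly = computeDeriv poly) ∧
    (∀ s : Bool × Bool × Bool × Bool × Bool, cost s ≤ 2 →
      ∃ poly : List ℤ, InDomain poly ∧ candidate s poly ≠ computeDeriv poly) := by

  refine ⟨rfl, ?_, ?_⟩
  · rintro poly ⟨h1, h2, -⟩
    match poly, h1, h2 with
    | [a], _, _ =>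
      simp [candidate, computeDeriv, List.range_succ, List.range', mul_comm]
    | [a,b], _, _ =>
      simp [candidate, computeDeriv, List.range_succ, List.range', mul_comm]
    | [a,b,c], _, _ =>
      simp [candidate, computeDeriv, List.range_succ, List.range', mul_comm]
    | [a,b,c,d], _, _ =>
      simp [candidate, computeDeriv, List.range_succ, List.range', mul_comm]
  · rintro ⟨s1, s2, s3, s4, s5⟩ hc
    cases s1 <;> cases s2 <;> cases s3 <;> cases s4 <;> cases s5 <;>
      first
        | exact ⟨[1,2], by norm_num [InDomain], by decide⟩
        | exact ⟨[1,0,1], by norm_num [InDomain], by decide⟩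
        | exact ⟨[1], by norm_num [InDomain], by decide⟩
        | simp [cost] at hc
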